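/- Let G be a profinite group, H ⊆ G a closed normal subgroup, E a finite extension of ℚ_ℓ, and ρ_H: H → GL_r(E) a continuous absolutely simple representation such that for every g ∈ G the conjugate h ↦ ρ_H(g h g^{-1}) is isomorphic to ρ_H. Then the assignment g ↦ P_g, where P_g ∈ PGL_r(E) is the unique element with P_g ρ_H(h) P_g^{-1} = ρ_H(g h g^{-1}) for all h ∈ H, is a continuous group homomorphism G → PGL_r(E) extending the projectivization of ρ_H. -/

import Mathlib

section Aux

variable {E : Type*} [NormedField E] {r : ℕ}

private lemma conj_entry (A B : Matrix (Fin r) (Fin r) E) (i j k l : Fin r) :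
    (A * Matrix.single i j (1 : E) * B) k l = A k i * B j l := by
  simp [Matrix.mul_apply, Matrix.single, Finset.sum_ite_eq, ite_and]

private lemma scalar_mem_center (a : E) (Z : GL (Fin r) E)
    (hZ : (Z : Matrix (Fin r) (Fin r) E) = a • (1 : Matrix (Fin r) (Fin r) E)) :
    Z ∈ Subgroup.center (GL (Fin r) E) := by
  rw [Subgroup.mem_center_iff]
  intro g
  apply Units.ext
  simp only [Units.val_mul, hZ, Matrix.smul_mul, Matrix.mul_smul, Matrix.one_mul, Matrix.mul_one]

end Aux

/-- Clifford theory for profinite groups: if `ρ_H` is a continuous absolutely simple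
representation of a closed normal subgroup `H` of a profinite group `G` over a finite
extension `E` of `ℚ_ℓ`, all of whose `G`-conjugates are isomorphic to itself, then the
assignment `g ↦ P_g`, where `P_g ∈ PGL_r(E)` is the unique element conjugating `ρ_H`
into its `g`-conjugate, is a continuous homomorphism `G → PGL_r(E)` extending the
projectivization of `ρ_H`. -/
theorem exists_continuous_projective_extension
    (ℓ : ℕ) [Fact ℓ.Prime] {E : Type*} [NormedField E] [Algebra ℚ_[ℓ] E]
    [FiniteDimensional ℚ_[ℓ] E]
    {G : Type*} [Group G] [TopologicalSpace G] [IsTopologicalGroup G]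
    [CompactSpace G] [T2Space G] [TotallyDisconnectedSpace G]
    (H : Subgroup G) (hH : H.Normal) (hHcl : IsClosed (H : Set G))
    {r : ℕ} (ρH : H →* GL (Fin r) E) (hρc : Continuous ρH)
    (hsimple : Submodule.span E
      {M : Matrix (Fin r) (Fin r) E | ∃ h : H, (ρH h : Matrix (Fin r) (Fin r) E) = M}
        = ⊤)
    (hconj : ∀ g : G, ∃ W : GL (Fin r) E, ∀ h : H,
      W * ρH h * W⁻¹ = ρH ⟨g * h * g⁻¹, hH.conj_mem h.1 h.2 g⟩) :
    ∃ P : G →* (GL (Fin r) E ⧸ Subgroup.center (GL (Fin r) E)),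
      Continuous P ∧
      (∀ h : H, P (h : G) = QuotientGroup.mk (ρH h)) ∧
      ∀ g : G, ∀ W : GL (Fin r) E, (QuotientGroup.mk W : GL (Fin r) E ⧸ Subgroup.center (GL (Fin r) E)) = P g →
        ∀ h : H, W * ρH h * W⁻¹ = ρH ⟨g * h * g⁻¹, hH.conj_mem h.1 h.2 g⟩ := by
  classical
  -- Step 1: anything commuting with all `ρH h` is central.
  have hcentral : ∀ Z : GL (Fin r) E, (∀ h : H, Z * ρH h = ρH h * Z) →
      Z ∈ Subgroup.center (GL (Fin r) E) := by
    intro Z hZ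
    have hmat : ∀ M : Matrix (Fin r) (Fin r) E,
        (Z : Matrix (Fin r) (Fin r) E) * M = M * (Z : Matrix (Fin r) (Fin r) E) := by
      intro M
      have hM : M ∈ Submodule.span E
          {M : Matrix (Fin r) (Fin r) E | ∃ h : H, (ρH h : Matrix (Fin r) (Fin r) E) = M} := by
        rw [hsimple]; trivial
      induction hM using Submodule.span_induction with
      | mem x hx =>
        obtain ⟨h, rfl⟩ := hx
        simpa [Units.val_mul] using congrArg Units.val (hZ h)
      | zero => simp
      | add x y hx hy ihx ihy => rw [mul_add, add_mul, ihx, ihy]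
      | smul a x hx ih => rw [mul_smul_comm, smul_mul_assoc, ih]
    rw [Subgroup.mem_center_iff]
    intro g
    exact Units.ext (by simpa [Units.val_mul] using (hmat (g : Matrix (Fin r) (Fin r) E)).symm)
  -- Step 2: uniqueness of the conjugating element up to center.
  have huniq : ∀ (g : G) (A B : GL (Fin r) E),
      (∀ h : H, A * ρH h * A⁻¹ = ρH ⟨g * h * g⁻¹, hH.conj_mem h.1 h.2 g⟩) →
      (∀ h : H, B * ρH h * B⁻¹ = ρH ⟨g * h * g⁻¹, hH.conj_mem h.1 h.2 g⟩) →
      (QuotientGroup.mk A : GL (Fin r) E ⧸ Subgroup.center (GL (Fin r) E))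
        = QuotientGroup.mk B := by
    intro g A B hA hB
    rw [QuotientGroup.eq]
    apply hcentral
    intro h
    have hAB : A * ρH h * A⁻¹ = B * ρH h * B⁻¹ := (hA h).trans (hB h).symm
    calc A⁻¹ * B * ρH h = A⁻¹ * (B * ρH h * B⁻¹) * B := by group
      _ = A⁻¹ * (A * ρH h * A⁻¹) * B := by rw [hAB]
      _ = ρH h * (A⁻¹ * B) := by group
  choose W hW using hconj
  -- Step 3: P as a monoid hom.
  have hmul : ∀ g₁ g₂ : G, ∀ h : H,
      (W g₁ * W g₂) * ρH h * (W g₁ * W g₂)⁻¹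
        = ρH ⟨(g₁ * g₂) * h * (g₁ * g₂)⁻¹, hH.conj_mem h.1 h.2 (g₁ * g₂)⟩ := by
    intro g₁ g₂ h
    have h1 : (W g₁ * W g₂) * ρH h * (W g₁ * W g₂)⁻¹
        = W g₁ * (W g₂ * ρH h * (W g₂)⁻¹) * (W g₁)⁻¹ := by group
    rw [h1, hW g₂ h, hW g₁]
    exact congrArg ρH (Subtype.ext (by group))
  let P : G →* (GL (Fin r) E ⧸ Subgroup.center (GL (Fin r) E)) :=
    { toFun := fun g => QuotientGroup.mk (W g)
      map_one' := by
        have h1 : ∀ h : H, (1 : GL (Fin r) E) * ρH h * (1 : GL (Fin r) E)⁻¹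
            = ρH ⟨(1 : G) * h * (1 : G)⁻¹, hH.conj_mem h.1 h.2 1⟩ := by
          intro h
          simpa using (congrArg ρH (Subtype.ext (by simp)) :
            ρH h = ρH ⟨(1 : G) * h * (1 : G)⁻¹, hH.conj_mem h.1 h.2 1⟩)
        simpa using huniq 1 (W 1) 1 (hW 1) h1
      map_mul' := by
        intro g₁ g₂
        simpa [QuotientGroup.mk_mul] using huniq (g₁ * g₂) (W (g₁ * g₂)) (W g₁ * W g₂)
          (hW (g₁ * g₂)) (hmul g₁ g₂) }
  have hPdef : ∀ g : G, P g = QuotientGroup.mk (W g) := fun g => rfl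
  -- extension property
  have hext : ∀ h : H, P (h : G) = QuotientGroup.mk (ρH h) := by
    intro h
    refine huniq (h : G) (W (h : G)) (ρH h) (hW (h : G)) ?_
    intro h'
    have : (h : G) * (h' : G) * (h : G)⁻¹ = ((h * h' * h⁻¹ : H) : G) := by push_cast; ring_nf
    rw [← map_inv, ← map_mul, ← map_mul]
    exact congrArg ρH (Subtype.ext this.symm)
  -- the "any representative conjugates correctly" property
  have hrep : ∀ g : G, ∀ V : GL (Fin r) E,
      (QuotientGroup.mk V : GL (Fin r) E ⧸ Subgroup.center (GL (Fin r) E)) = P g →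
      ∀ h : H, V * ρH h * V⁻¹ = ρH ⟨g * h * g⁻¹, hH.conj_mem h.1 h.2 g⟩ := by
    intro g V hV h
    rw [hPdef, QuotientGroup.eq] at hV
    set z := V⁻¹ * W g with hz
    have hzc : z⁻¹ ∈ Subgroup.center (GL (Fin r) E) := inv_mem hV
    have hcomm : ρH h * z⁻¹ = z⁻¹ * ρH h := Subgroup.mem_center_iff.mp hzc (ρH h)
    have hVW : V = W g * z⁻¹ := by rw [hz]; group
    calc V * ρH h * V⁻¹ = W g * (z⁻¹ * ρH h * z) * (W g)⁻¹ := by rw [hVW]; group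
      _ = W g * ρH h * (W g)⁻¹ := by rw [← hcomm]; group
      _ = _ := hW g h
  -- Step 4: continuity.
  refine ⟨P, ?_, hext, hrep⟩
  -- matrix-level conjugation identity
  have hWval : ∀ (g : G) (h : H),
      (W g : Matrix (Fin r) (Fin r) E) * (ρH h : Matrix (Fin r) (Fin r) E)
        * (((W g)⁻¹ : GL (Fin r) E) : Matrix (Fin r) (Fin r) E)
      = (ρH ⟨g * h * g⁻¹, hH.conj_mem h.1 h.2 g⟩ : Matrix (Fin r) (Fin r) E) := by
    intro g h
    simpa [Units.val_mul] using congrArg Units.val (hW g h)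
  have hcρ : ∀ h : H, Continuous fun g : G =>
      ((ρH ⟨g * h * g⁻¹, hH.conj_mem h.1 h.2 g⟩ : GL (Fin r) E) :
        Matrix (Fin r) (Fin r) E) := by
    intro h
    have h1 : Continuous fun g : G => (⟨g * h * g⁻¹, hH.conj_mem h.1 h.2 g⟩ : H) :=
      Continuous.subtype_mk ((continuous_id.mul continuous_const).mul continuous_inv) _
    exact Units.continuous_val.comp (hρc.comp h1)
  have hconjC : ∀ M : Matrix (Fin r) (Fin r) E, Continuous fun g : G =>
      (W g : Matrix (Fin r) (Fin r) E) * M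
        * (((W g)⁻¹ : GL (Fin r) E) : Matrix (Fin r) (Fin r) E) := by
    intro M
    have hM : M ∈ Submodule.span E
        {M : Matrix (Fin r) (Fin r) E | ∃ h : H, (ρH h : Matrix (Fin r) (Fin r) E) = M} := by
      rw [hsimple]; trivial
    induction hM using Submodule.span_induction with
    | mem x hx =>
      obtain ⟨h, rfl⟩ := hx
      simp only [hWval]
      exact hcρ h
    | zero => simpa using continuous_const
    | add x y hx hy ihx ihy =>
      simp only [mul_add, add_mul]; exact ihx.add ihy
    | smul a x hx ih =>
      simp only [mul_smul_comm, smul_mul_assoc]; exact ih.const_smul a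
  rcases Nat.eq_zero_or_pos r with hr | hr
  · -- r = 0 : everything is trivial
    subst hr
    haveI : Subsingleton (Matrix (Fin 0) (Fin 0) E) :=
      ⟨fun A B => by ext i; exact i.elim0⟩
    have hP : (⇑P) = fun _ => (1 : GL (Fin 0) E ⧸ Subgroup.center (GL (Fin 0) E)) := by
      funext g
      rw [hPdef]
      have : W g = 1 := Units.ext (Subsingleton.elim _ _)
      rw [this, QuotientGroup.mk_one]
    rw [hP]; exact continuous_const
  · -- r > 0 : build a local continuous section near 1
    have i0 : Fin r := ⟨0, hr⟩
    -- pick nonzero entries of W 1 and (W 1)⁻¹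
    have hWinv1 : ∃ j0 l0 : Fin r,
        (((W 1)⁻¹ : GL (Fin r) E) : Matrix (Fin r) (Fin r) E) j0 l0 ≠ 0 := by
      by_contra hcon
      push_neg at hcon
      have h0 : (((W 1)⁻¹ : GL (Fin r) E) : Matrix (Fin r) (Fin r) E) = 0 := by
        ext j l; exact hcon j l
      have := ((W 1)⁻¹ : GL (Fin r) E).val_inv
      rw [h0, zero_mul] at this
      have h11 := congrArg (fun A : Matrix (Fin r) (Fin r) E => A i0 i0) this
      simp at h11
    have hW1 : ∃ k0 i1 : Fin r,
        ((W 1 : GL (Fin r) E) : Matrix (Fin r) (Fin r) E) k0 i1 ≠ 0 := by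
      by_contra hcon
      push_neg at hcon
      have h0 : ((W 1 : GL (Fin r) E) : Matrix (Fin r) (Fin r) E) = 0 := by
        ext k i; exact hcon k i
      have := (W 1 : GL (Fin r) E).val_inv
      rw [h0, zero_mul] at this
      have h11 := congrArg (fun A : Matrix (Fin r) (Fin r) E => A i0 i0) this
      simp at h11
    obtain ⟨j0, l0, hj0l0⟩ := hWinv1
    obtain ⟨k0, i1, hk0i1⟩ := hW1
    set c : G → E := fun g => (((W g)⁻¹ : GL (Fin r) E) : Matrix (Fin r) (Fin r) E) j0 l0
      with hc
    set d : G → E := fun g => ((W g : GL (Fin r) E) : Matrix (Fin r) (Fin r) E) k0 i1 with hd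
    set s : G → Matrix (Fin r) (Fin r) E := fun g => Matrix.of fun k i =>
      ((W g : Matrix (Fin r) (Fin r) E) * Matrix.single i j0 (1 : E)
        * (((W g)⁻¹ : GL (Fin r) E) : Matrix (Fin r) (Fin r) E)) k l0 with hsdef
    set s' : G → Matrix (Fin r) (Fin r) E := fun g => Matrix.of fun j l =>
      ((W g : Matrix (Fin r) (Fin r) E) * Matrix.single i1 j (1 : E)
        * (((W g)⁻¹ : GL (Fin r) E) : Matrix (Fin r) (Fin r) E)) k0 l with hs'def
    have hs : ∀ g, s g = c g • (W g : Matrix (Fin r) (Fin r) E) := by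
      intro g; ext k i
      simp only [hsdef, Matrix.of_apply, conj_entry, Matrix.smul_apply, smul_eq_mul, hc]
      ring
    have hs' : ∀ g, s' g = d g • (((W g)⁻¹ : GL (Fin r) E) : Matrix (Fin r) (Fin r) E) := by
      intro g; ext j l
      simp only [hs'def, Matrix.of_apply, conj_entry, Matrix.smul_apply, smul_eq_mul, hd]
    have hsc : Continuous s := by
      apply continuous_matrix
      intro k i
      exact ((hconjC (Matrix.single i j0 (1 : E))).matrix_elem k l0)
    have hs'c : Continuous s' := by
      apply continuous_matrix
      intro j l
      exact ((hconjC (Matrix.single i1 j (1 : E))).matrix_elem k0 l)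
    have hss' : ∀ g, s g * s' g = (c g * d g) • (1 : Matrix (Fin r) (Fin r) E) := by
      intro g
      rw [hs, hs', Matrix.smul_mul, Matrix.mul_smul, (W g).mul_inv, smul_smul]
    have hs's : ∀ g, s' g * s g = (c g * d g) • (1 : Matrix (Fin r) (Fin r) E) := by
      intro g
      rw [hs, hs', Matrix.smul_mul, Matrix.mul_smul, (W g).inv_mul, smul_smul, mul_comm]
    set e : G → E := fun g => (s g * s' g) i0 i0 with he
    have heval : ∀ g, e g = c g * d g := by
      intro g
      show (s g * s' g) i0 i0 = c g * d g
      rw [hss' g]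
      simp [Matrix.smul_apply, Matrix.one_apply_eq]
    have hec : Continuous e := (hsc.matrix_mul hs'c).matrix_elem i0 i0
    set U : Set G := {g | e g ≠ 0} with hU
    have hUopen : IsOpen U := isOpen_compl_singleton.preimage hec
    have h1U : (1 : G) ∈ U := by
      rw [hU]; simp only [Set.mem_setOf_eq, heval]
      exact mul_ne_zero hj0l0 hk0i1
    -- the section
    let f : U → GL (Fin r) E := fun x =>
      { val := s x
        inv := (e x)⁻¹ • s' x
        val_inv := by
          have hx : e (x : G) ≠ 0 := x.2
          rw [Matrix.mul_smul, hss', smul_smul, ← heval, inv_mul_cancel₀ hx, one_smul]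
        inv_val := by
          have hx : e (x : G) ≠ 0 := x.2
          rw [Matrix.smul_mul, hs's, smul_smul, ← heval, inv_mul_cancel₀ hx, one_smul] }
    have hfc : Continuous f := by
      rw [Units.continuous_iff]
      constructor
      · exact hsc.comp continuous_subtype_val
      · have h1 : Continuous fun x : U => (e x)⁻¹ :=
          (hec.comp continuous_subtype_val).inv₀ (fun x => x.2)
        exact h1.smul (hs'c.comp continuous_subtype_val)
    have hkey : ∀ x : U, (QuotientGroup.mk (f x) :
        GL (Fin r) E ⧸ Subgroup.center (GL (Fin r) E)) = P x := by
      intro x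
      rw [hPdef]
      have hzc : f x * (W (x : G))⁻¹ ∈ Subgroup.center (GL (Fin r) E) := by
        apply scalar_mem_center (c (x : G))
        have : ((f x * (W (x : G))⁻¹ : GL (Fin r) E) : Matrix (Fin r) (Fin r) E)
            = s (x : G) * (((W (x : G))⁻¹ : GL (Fin r) E) : Matrix (Fin r) (Fin r) E) := rfl
        rw [this, hs, Matrix.smul_mul, (W (x : G)).mul_inv]
      have hfW : f x = (f x * (W (x : G))⁻¹) * W (x : G) := by group
      rw [hfW, QuotientGroup.mk_mul, (QuotientGroup.eq_one_iff _).mpr hzc, one_mul]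
    -- continuity at 1, then everywhere
    have hContOn : ContinuousOn (⇑P) U := by
      rw [continuousOn_iff_continuous_restrict]
      have : U.restrict (⇑P) = fun x : U => (QuotientGroup.mk (f x) :
          GL (Fin r) E ⧸ Subgroup.center (GL (Fin r) E)) := by
        funext x
        exact (hkey x).symm
      rw [show U.domRestrict ⇑P = _ from this]
      exact continuous_quotient_mk'.comp hfc
    exact continuous_of_continuousAt_one P (hContOn.continuousAt (hUopen.mem_nhds h1U))
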